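/- arXiv:2107.08105 — 3 statements merged into one kernel-verified Lean document; each statement's English description precedes it below -/
import Mathlib

section
/- Let M, N be twice differentiable on (0,∞) and ℝ respectively, and set ψ(μ,ν) = (μ²+ν²)^{-1/2} M(μ)N(ν) for μ > 0. Then E²ψ = 0, where E² = (μ²+ν²)²[∂²/∂μ² + (μ²−ν²)/(μ(μ²+ν²)) ∂/∂μ + 2ν/(μ²+ν²) ∂/∂ν + ∂²/∂ν²], holds at (μ,ν) with M(μ)N(ν) ≠ 0 if and only if (M''(μ) − M'(μ)/μ)/M(μ) + N''(ν)/N(ν) = 0 at that point. -/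
set_option maxHeartbeats 1000000

private lemma ts_aux (r μ ν m dm ddm n dn ddn : ℝ)
    (hr2 : r ^ 2 = μ ^ 2 + ν ^ 2) (hrne : r ≠ 0) (hμ : μ ≠ 0)
    (hm : m ≠ 0) (hn : n ≠ 0) :
    ((μ ^ 2 + ν ^ 2) ^ 2 *
      (((3 * μ ^ 2 / (r * (μ ^ 2 + ν ^ 2) ^ 2) - 1 / (r * (μ ^ 2 + ν ^ 2))) * m
          - 2 * μ / (r * (μ ^ 2 + ν ^ 2)) * dm + r⁻¹ * ddm) * n
        + (μ ^ 2 - ν ^ 2) / (μ * (μ ^ 2 + ν ^ 2)) *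
            ((-(μ / (r * (μ ^ 2 + ν ^ 2))) * m + r⁻¹ * dm) * n)
        + 2 * ν / (μ ^ 2 + ν ^ 2) *
            (-(ν / (r * (μ ^ 2 + ν ^ 2))) * m * n + r⁻¹ * m * dn)
        + ((3 * ν ^ 2 / (r * (μ ^ 2 + ν ^ 2) ^ 2) - 1 / (r * (μ ^ 2 + ν ^ 2))) * (m * n)
            - 2 * ν / (r * (μ ^ 2 + ν ^ 2)) * (m * dn) + r⁻¹ * (m * ddn))) = 0)
    ↔ (ddm - dm / μ) / m + ddn / n = 0 := by
  have hsne : μ ^ 2 + ν ^ 2 ≠ 0 := by rw [← hr2]; exact pow_ne_zero 2 hrne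
  have key : (μ ^ 2 + ν ^ 2) ^ 2 *
      (((3 * μ ^ 2 / (r * (μ ^ 2 + ν ^ 2) ^ 2) - 1 / (r * (μ ^ 2 + ν ^ 2))) * m
          - 2 * μ / (r * (μ ^ 2 + ν ^ 2)) * dm + r⁻¹ * ddm) * n
        + (μ ^ 2 - ν ^ 2) / (μ * (μ ^ 2 + ν ^ 2)) *
            ((-(μ / (r * (μ ^ 2 + ν ^ 2))) * m + r⁻¹ * dm) * n)
        + 2 * ν / (μ ^ 2 + ν ^ 2) *
            (-(ν / (r * (μ ^ 2 + ν ^ 2))) * m * n + r⁻¹ * m * dn)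
        + ((3 * ν ^ 2 / (r * (μ ^ 2 + ν ^ 2) ^ 2) - 1 / (r * (μ ^ 2 + ν ^ 2))) * (m * n)
            - 2 * ν / (r * (μ ^ 2 + ν ^ 2)) * (m * dn) + r⁻¹ * (m * ddn)))
      = (r * (μ ^ 2 + ν ^ 2)) * ((ddm - dm / μ) * n + m * ddn) := by
    rw [← hr2]; field_simp
    linear_combination (r ^ 2 * dm * n - 2 * μ * m * n) * hr2
  rw [key, div_add_div _ _ hm hn, div_eq_zero_iff, mul_eq_zero]
  simp [mul_ne_zero hrne hsne, mul_ne_zero hm hn]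

theorem tangent_sphere_R_separation (M N : ℝ → ℝ)
    (hM1 : ∀ x > 0, DifferentiableAt ℝ M x)
    (hM2 : ∀ x > 0, DifferentiableAt ℝ (deriv M) x)
    (hN1 : ∀ x : ℝ, DifferentiableAt ℝ N x)
    (hN2 : ∀ x : ℝ, DifferentiableAt ℝ (deriv N) x)
    (μ ν : ℝ) (hμ : 0 < μ) (hMN : M μ * N ν ≠ 0) :
    ((μ ^ 2 + ν ^ 2) ^ 2 *
      (deriv (deriv (fun m => (Real.sqrt (m ^ 2 + ν ^ 2))⁻¹ * M m * N ν)) μ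
        + (μ ^ 2 - ν ^ 2) / (μ * (μ ^ 2 + ν ^ 2)) *
            deriv (fun m => (Real.sqrt (m ^ 2 + ν ^ 2))⁻¹ * M m * N ν) μ
        + 2 * ν / (μ ^ 2 + ν ^ 2) *
            deriv (fun nn => (Real.sqrt (μ ^ 2 + nn ^ 2))⁻¹ * M μ * N nn) ν
        + deriv (deriv (fun nn => (Real.sqrt (μ ^ 2 + nn ^ 2))⁻¹ * M μ * N nn)) ν) = 0)
    ↔ (deriv (deriv M) μ - deriv M μ / μ) / M μ + deriv (deriv N) ν / N ν = 0 := by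
  have hM0 : M μ ≠ 0 := fun h => hMN (by rw [h, zero_mul])
  have hN0 : N ν ≠ 0 := fun h => hMN (by rw [h, mul_zero])
  have hμ' : μ ≠ 0 := ne_of_gt hμ
  have hs : (0:ℝ) < μ ^ 2 + ν ^ 2 := by positivity
  have hrpos : 0 < Real.sqrt (μ ^ 2 + ν ^ 2) := Real.sqrt_pos.mpr hs
  have hrne : Real.sqrt (μ ^ 2 + ν ^ 2) ≠ 0 := ne_of_gt hrpos
  have hr2 : Real.sqrt (μ ^ 2 + ν ^ 2) ^ 2 = μ ^ 2 + ν ^ 2 := Real.sq_sqrt hs.le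
  -- first derivative in μ direction, at any m > 0
  have hd1μ : ∀ m : ℝ, 0 < m →
      HasDerivAt (fun m => (Real.sqrt (m ^ 2 + ν ^ 2))⁻¹ * M m * N ν)
        ((-(m / (Real.sqrt (m ^ 2 + ν ^ 2) * (m ^ 2 + ν ^ 2))) * M m
            + (Real.sqrt (m ^ 2 + ν ^ 2))⁻¹ * deriv M m) * N ν) m := by
    intro m hm
    have hsm : (0:ℝ) < m ^ 2 + ν ^ 2 := by positivity
    have hrm : (0:ℝ) < Real.sqrt (m ^ 2 + ν ^ 2) := Real.sqrt_pos.mpr hsm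
    have hrmne : Real.sqrt (m ^ 2 + ν ^ 2) ≠ 0 := ne_of_gt hrm
    have hrm2 : Real.sqrt (m ^ 2 + ν ^ 2) ^ 2 = m ^ 2 + ν ^ 2 := Real.sq_sqrt hsm.le
    have hq : HasDerivAt (fun m : ℝ => m ^ 2 + ν ^ 2) (2 * m) m := by
      simpa using (hasDerivAt_pow 2 m).add_const (ν ^ 2)
    have hsq := hq.sqrt (ne_of_gt hsm)
    have hinv := hsq.inv hrmne
    have h := (hinv.mul ((hM1 m hm).hasDerivAt)).mul_const (N ν)
    refine h.congr_deriv ?_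
    simp only [Pi.inv_apply, Pi.mul_apply, Pi.div_apply, Pi.neg_apply, id]
    generalize hg : Real.sqrt (m ^ 2 + ν ^ 2) = r
    rw [hg] at hrmne hrm2
    rw [← hrm2]
    field_simp
  -- second derivative in μ direction
  have hd2μ : deriv (deriv (fun m => (Real.sqrt (m ^ 2 + ν ^ 2))⁻¹ * M m * N ν)) μ
      = ((3 * μ ^ 2 / (Real.sqrt (μ ^ 2 + ν ^ 2) * (μ ^ 2 + ν ^ 2) ^ 2)
            - 1 / (Real.sqrt (μ ^ 2 + ν ^ 2) * (μ ^ 2 + ν ^ 2))) * M μ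
          - 2 * μ / (Real.sqrt (μ ^ 2 + ν ^ 2) * (μ ^ 2 + ν ^ 2)) * deriv M μ
          + (Real.sqrt (μ ^ 2 + ν ^ 2))⁻¹ * deriv (deriv M) μ) * N ν := by
    have hev : deriv (fun m => (Real.sqrt (m ^ 2 + ν ^ 2))⁻¹ * M m * N ν)
        =ᶠ[nhds μ] (fun m => (-(m / (Real.sqrt (m ^ 2 + ν ^ 2) * (m ^ 2 + ν ^ 2))) * M m
            + (Real.sqrt (m ^ 2 + ν ^ 2))⁻¹ * deriv M m) * N ν) :=
      Filter.eventuallyEq_of_mem (Ioi_mem_nhds hμ) (fun m hm => (hd1μ m hm).deriv)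
    rw [hev.deriv_eq]
    have hq : HasDerivAt (fun m : ℝ => m ^ 2 + ν ^ 2) (2 * μ) μ := by
      simpa using (hasDerivAt_pow 2 μ).add_const (ν ^ 2)
    have hsq := hq.sqrt (ne_of_gt hs)
    have hden := hsq.mul hq
    have hdenne : Real.sqrt (μ ^ 2 + ν ^ 2) * (μ ^ 2 + ν ^ 2) ≠ 0 :=
      mul_ne_zero hrne (ne_of_gt hs)
    have hfrac := ((hasDerivAt_id μ).div hden hdenne).neg
    have hterm1 := hfrac.mul ((hM1 μ hμ).hasDerivAt)
    have hterm2 := (hsq.inv hrne).mul ((hM2 μ hμ).hasDerivAt)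
    have h := (hterm1.add hterm2).mul_const (N ν)
    have hcl : HasDerivAt (fun m => (-(m / (Real.sqrt (m ^ 2 + ν ^ 2) * (m ^ 2 + ν ^ 2))) * M m
            + (Real.sqrt (m ^ 2 + ν ^ 2))⁻¹ * deriv M m) * N ν)
        (((3 * μ ^ 2 / (Real.sqrt (μ ^ 2 + ν ^ 2) * (μ ^ 2 + ν ^ 2) ^ 2)
            - 1 / (Real.sqrt (μ ^ 2 + ν ^ 2) * (μ ^ 2 + ν ^ 2))) * M μ
          - 2 * μ / (Real.sqrt (μ ^ 2 + ν ^ 2) * (μ ^ 2 + ν ^ 2)) * deriv M μ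
          + (Real.sqrt (μ ^ 2 + ν ^ 2))⁻¹ * deriv (deriv M) μ) * N ν) μ := by
      refine h.congr_deriv ?_
      simp only [Pi.inv_apply, Pi.mul_apply, Pi.div_apply, Pi.neg_apply, id]
      have hh2 := hr2
      have hhn := hrne
      generalize hg : Real.sqrt (μ ^ 2 + ν ^ 2) = r
      rw [hg] at hh2 hhn
      rw [← hh2]
      field_simp
      ring
    exact hcl.deriv
  -- first derivative in ν direction, at any n
  have hd1ν : ∀ n : ℝ,
      HasDerivAt (fun nn => (Real.sqrt (μ ^ 2 + nn ^ 2))⁻¹ * M μ * N nn)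
        (-(n / (Real.sqrt (μ ^ 2 + n ^ 2) * (μ ^ 2 + n ^ 2))) * M μ * N n
          + (Real.sqrt (μ ^ 2 + n ^ 2))⁻¹ * M μ * deriv N n) n := by
    intro n
    have hsn : (0:ℝ) < μ ^ 2 + n ^ 2 := by positivity
    have hrn : (0:ℝ) < Real.sqrt (μ ^ 2 + n ^ 2) := Real.sqrt_pos.mpr hsn
    have hrnne : Real.sqrt (μ ^ 2 + n ^ 2) ≠ 0 := ne_of_gt hrn
    have hrn2 : Real.sqrt (μ ^ 2 + n ^ 2) ^ 2 = μ ^ 2 + n ^ 2 := Real.sq_sqrt hsn.le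
    have hq : HasDerivAt (fun nn : ℝ => μ ^ 2 + nn ^ 2) (2 * n) n := by
      simpa using (hasDerivAt_pow 2 n).const_add (μ ^ 2)
    have hsq := hq.sqrt (ne_of_gt hsn)
    have hinv := hsq.inv hrnne
    have h := (hinv.mul_const (M μ)).mul ((hN1 n).hasDerivAt)
    refine h.congr_deriv ?_
    simp only [Pi.inv_apply, Pi.mul_apply, Pi.div_apply, Pi.neg_apply, id]
    generalize hg : Real.sqrt (μ ^ 2 + n ^ 2) = r
    rw [hg] at hrnne hrn2
    rw [← hrn2]
    field_simp
  -- second derivative in ν direction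
  have hd2ν : deriv (deriv (fun nn => (Real.sqrt (μ ^ 2 + nn ^ 2))⁻¹ * M μ * N nn)) ν
      = (3 * ν ^ 2 / (Real.sqrt (μ ^ 2 + ν ^ 2) * (μ ^ 2 + ν ^ 2) ^ 2)
            - 1 / (Real.sqrt (μ ^ 2 + ν ^ 2) * (μ ^ 2 + ν ^ 2))) * (M μ * N ν)
          - 2 * ν / (Real.sqrt (μ ^ 2 + ν ^ 2) * (μ ^ 2 + ν ^ 2)) * (M μ * deriv N ν)
          + (Real.sqrt (μ ^ 2 + ν ^ 2))⁻¹ * (M μ * deriv (deriv N) ν) := by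
    have hfe : deriv (fun nn => (Real.sqrt (μ ^ 2 + nn ^ 2))⁻¹ * M μ * N nn)
        = fun n => -(n / (Real.sqrt (μ ^ 2 + n ^ 2) * (μ ^ 2 + n ^ 2))) * M μ * N n
          + (Real.sqrt (μ ^ 2 + n ^ 2))⁻¹ * M μ * deriv N n :=
      funext fun n => (hd1ν n).deriv
    rw [hfe]
    have hq : HasDerivAt (fun nn : ℝ => μ ^ 2 + nn ^ 2) (2 * ν) ν := by
      simpa using (hasDerivAt_pow 2 ν).const_add (μ ^ 2)
    have hsq := hq.sqrt (ne_of_gt hs)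
    have hden := hsq.mul hq
    have hdenne : Real.sqrt (μ ^ 2 + ν ^ 2) * (μ ^ 2 + ν ^ 2) ≠ 0 :=
      mul_ne_zero hrne (ne_of_gt hs)
    have hfrac := ((hasDerivAt_id ν).div hden hdenne).neg
    have hterm1 := (hfrac.mul_const (M μ)).mul ((hN1 ν).hasDerivAt)
    have hterm2 := ((hsq.inv hrne).mul_const (M μ)).mul ((hN2 ν).hasDerivAt)
    have h := hterm1.add hterm2
    have hcl : HasDerivAt (fun n => -(n / (Real.sqrt (μ ^ 2 + n ^ 2) * (μ ^ 2 + n ^ 2))) * M μ * N n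
          + (Real.sqrt (μ ^ 2 + n ^ 2))⁻¹ * M μ * deriv N n)
        ((3 * ν ^ 2 / (Real.sqrt (μ ^ 2 + ν ^ 2) * (μ ^ 2 + ν ^ 2) ^ 2)
            - 1 / (Real.sqrt (μ ^ 2 + ν ^ 2) * (μ ^ 2 + ν ^ 2))) * (M μ * N ν)
          - 2 * ν / (Real.sqrt (μ ^ 2 + ν ^ 2) * (μ ^ 2 + ν ^ 2)) * (M μ * deriv N ν)
          + (Real.sqrt (μ ^ 2 + ν ^ 2))⁻¹ * (M μ * deriv (deriv N) ν)) ν := by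
      refine h.congr_deriv ?_
      simp only [Pi.inv_apply, Pi.mul_apply, Pi.div_apply, Pi.neg_apply, id]
      have hh2 := hr2
      have hhn := hrne
      generalize hg : Real.sqrt (μ ^ 2 + ν ^ 2) = r
      rw [hg] at hh2 hhn
      rw [← hh2]
      field_simp
      ring
    exact hcl.deriv
  rw [hd2μ, (hd1μ μ hμ).deriv, (hd1ν ν).deriv, hd2ν]
  exact ts_aux (Real.sqrt (μ ^ 2 + ν ^ 2)) μ ν (M μ) (deriv M μ) (deriv (deriv M) μ)
    (N ν) (deriv N ν) (deriv (deriv N) ν) hr2 hrne hμ' hM0 hN0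
end

section
/- Let n > 0, and let M : (0,∞) → ℝ satisfy M''(μ) − M'(μ)/μ − n²M(μ) = 0, and let N(ν) = C cos(nν) + D sin(nν) for constants C, D. Then ψ(μ,ν) = (μ²+ν²)^{-1/2} M(μ) N(ν) satisfies the tangent-sphere Stokes equation ∂²ψ/∂μ² + (μ²−ν²)/(μ(μ²+ν²)) ∂ψ/∂μ + 2ν/(μ²+ν²) ∂ψ/∂ν + ∂²ψ/∂ν² = 0 for all μ > 0, ν ∈ ℝ. -/
open Real


lemma hasDerivAt_sqrtinv (c x : ℝ) (h : 0 < x ^ 2 + c) :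
    HasDerivAt (fun t => (Real.sqrt (t ^ 2 + c))⁻¹)
      (-(x / Real.sqrt (x ^ 2 + c) ^ 3)) x := by
  have hs : 0 < Real.sqrt (x ^ 2 + c) := Real.sqrt_pos.mpr h
  have hs2 : Real.sqrt (x ^ 2 + c) ^ 2 = x ^ 2 + c := Real.sq_sqrt h.le
  have h1 : HasDerivAt (fun t : ℝ => t ^ 2 + c) (2 * x) x := by
    simpa using (hasDerivAt_pow 2 x).add_const c
  have h2 : HasDerivAt (fun t => Real.sqrt (t ^ 2 + c))
      (x / Real.sqrt (x ^ 2 + c)) x := by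
    have := (Real.hasDerivAt_sqrt h.ne').comp x h1
    refine this.congr_deriv (Eq.symm ?_)
    set s := Real.sqrt (x ^ 2 + c)
    field_simp
  have h3 := h2.inv hs.ne'
  refine h3.congr_deriv (Eq.symm ?_)
  set s := Real.sqrt (x ^ 2 + c)
  field_simp

lemma hasDerivAt_sqrtinv' (c x : ℝ) (h : 0 < x ^ 2 + c) :
    HasDerivAt (fun t => -(t / Real.sqrt (t ^ 2 + c) ^ 3))
      ((3 * x ^ 2 - (x ^ 2 + c)) / Real.sqrt (x ^ 2 + c) ^ 5) x := by
  have hs : 0 < Real.sqrt (x ^ 2 + c) := Real.sqrt_pos.mpr h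
  have hs2 : Real.sqrt (x ^ 2 + c) ^ 2 = x ^ 2 + c := Real.sq_sqrt h.le
  have h1 : HasDerivAt (fun t : ℝ => t ^ 2 + c) (2 * x) x := by
    simpa using (hasDerivAt_pow 2 x).add_const c
  have h2 : HasDerivAt (fun t => Real.sqrt (t ^ 2 + c))
      (x / Real.sqrt (x ^ 2 + c)) x := by
    have := (Real.hasDerivAt_sqrt h.ne').comp x h1
    refine this.congr_deriv (Eq.symm ?_)
    set s := Real.sqrt (x ^ 2 + c)
    field_simp
  have h3 : HasDerivAt (fun t => Real.sqrt (t ^ 2 + c) ^ 3)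
      (3 * x * Real.sqrt (x ^ 2 + c)) x := by
    have := h2.pow 3
    refine this.congr_deriv (Eq.symm ?_)
    set s := Real.sqrt (x ^ 2 + c)
    field_simp
    ring
  have h4 := ((hasDerivAt_id x).div h3 (by positivity)).neg
  refine h4.congr_deriv (Eq.symm ?_)
  simp only [id_eq, one_mul]
  set s := Real.sqrt (x ^ 2 + c) with hsdef
  field_simp
  linear_combination hs2

lemma hasDerivAt_N (n C D x : ℝ) :
    HasDerivAt (fun t => C * Real.cos (n * t) + D * Real.sin (n * t))
      (-(C * n * Real.sin (n * x)) + D * n * Real.cos (n * x)) x := by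
  have hl : HasDerivAt (fun t : ℝ => n * t) n x := by
    simpa using (hasDerivAt_id x).const_mul n
  have hc := ((Real.hasDerivAt_cos (n * x)).comp x hl).const_mul C
  have hd := ((Real.hasDerivAt_sin (n * x)).comp x hl).const_mul D
  refine (hc.add hd).congr_deriv (Eq.symm ?_)
  ring

lemma hasDerivAt_N' (n C D x : ℝ) :
    HasDerivAt (fun t => -(C * n * Real.sin (n * t)) + D * n * Real.cos (n * t))
      (-(n ^ 2) * (C * Real.cos (n * x) + D * Real.sin (n * x))) x := by
  have hl : HasDerivAt (fun t : ℝ => n * t) n x := by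
    simpa using (hasDerivAt_id x).const_mul n
  have hc := (((Real.hasDerivAt_sin (n * x)).comp x hl).const_mul (C * n)).neg
  have hd := ((Real.hasDerivAt_cos (n * x)).comp x hl).const_mul (D * n)
  have h := hc.add hd
  simp only [Function.comp] at h
  refine h.congr_deriv (Eq.symm ?_)
  ring

theorem tangent_sphere_stokes_solution (n : ℝ) (hn : 0 < n) (M : ℝ → ℝ) (C D : ℝ)
    (hM1 : ∀ x > 0, DifferentiableAt ℝ M x)
    (hM2 : ∀ x > 0, DifferentiableAt ℝ (deriv M) x)
    (hM : ∀ μ > 0, deriv (deriv M) μ - deriv M μ / μ - n ^ 2 * M μ = 0) :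
    ∀ μ > 0, ∀ ν : ℝ,
      deriv (deriv (fun m => (Real.sqrt (m ^ 2 + ν ^ 2))⁻¹ * M m *
          (C * Real.cos (n * ν) + D * Real.sin (n * ν)))) μ
        + (μ ^ 2 - ν ^ 2) / (μ * (μ ^ 2 + ν ^ 2)) *
            deriv (fun m => (Real.sqrt (m ^ 2 + ν ^ 2))⁻¹ * M m *
              (C * Real.cos (n * ν) + D * Real.sin (n * ν))) μ
        + 2 * ν / (μ ^ 2 + ν ^ 2) *
            deriv (fun nn => (Real.sqrt (μ ^ 2 + nn ^ 2))⁻¹ * M μ *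
              (C * Real.cos (n * nn) + D * Real.sin (n * nn))) ν
        + deriv (deriv (fun nn => (Real.sqrt (μ ^ 2 + nn ^ 2))⁻¹ * M μ *
            (C * Real.cos (n * nn) + D * Real.sin (n * nn)))) ν = 0 := by
  intro μ hμ ν
  have hr : 0 < μ ^ 2 + ν ^ 2 := by positivity
  have hs : 0 < Real.sqrt (μ ^ 2 + ν ^ 2) := Real.sqrt_pos.mpr hr
  have hs2 : Real.sqrt (μ ^ 2 + ν ^ 2) ^ 2 = μ ^ 2 + ν ^ 2 := Real.sq_sqrt hr.le
  -- μ direction: first derivative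
  have hDμ : ∀ m : ℝ, 0 < m → HasDerivAt (fun m => (Real.sqrt (m ^ 2 + ν ^ 2))⁻¹ * M m *
      (C * Real.cos (n * ν) + D * Real.sin (n * ν)))
      ((-(m / Real.sqrt (m ^ 2 + ν ^ 2) ^ 3) * M m
        + (Real.sqrt (m ^ 2 + ν ^ 2))⁻¹ * deriv M m) *
        (C * Real.cos (n * ν) + D * Real.sin (n * ν))) m := by
    intro m hm
    have h0 : 0 < m ^ 2 + ν ^ 2 := by positivity
    exact ((hasDerivAt_sqrtinv (ν ^ 2) m h0).mul (hM1 m hm).hasDerivAt).mul_const _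
  have hEqμ : deriv (fun m => (Real.sqrt (m ^ 2 + ν ^ 2))⁻¹ * M m *
      (C * Real.cos (n * ν) + D * Real.sin (n * ν)))
      =ᶠ[nhds μ] fun m => (-(m / Real.sqrt (m ^ 2 + ν ^ 2) ^ 3) * M m
        + (Real.sqrt (m ^ 2 + ν ^ 2))⁻¹ * deriv M m) *
        (C * Real.cos (n * ν) + D * Real.sin (n * ν)) := by
    filter_upwards [isOpen_Ioi.mem_nhds hμ] with m hm
    exact (hDμ m hm).deriv
  have hkeyμ := hEqμ.deriv_eq
  have hP : HasDerivAt (fun m => (-(m / Real.sqrt (m ^ 2 + ν ^ 2) ^ 3) * M m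
        + (Real.sqrt (m ^ 2 + ν ^ 2))⁻¹ * deriv M m) *
        (C * Real.cos (n * ν) + D * Real.sin (n * ν)))
      (((3 * μ ^ 2 - (μ ^ 2 + ν ^ 2)) / Real.sqrt (μ ^ 2 + ν ^ 2) ^ 5 * M μ
          + -(μ / Real.sqrt (μ ^ 2 + ν ^ 2) ^ 3) * deriv M μ
        + (-(μ / Real.sqrt (μ ^ 2 + ν ^ 2) ^ 3) * deriv M μ
          + (Real.sqrt (μ ^ 2 + ν ^ 2))⁻¹ * deriv (deriv M) μ)) *
        (C * Real.cos (n * ν) + D * Real.sin (n * ν))) μ :=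
    (((hasDerivAt_sqrtinv' (ν ^ 2) μ hr).mul (hM1 μ hμ).hasDerivAt).add
      ((hasDerivAt_sqrtinv (ν ^ 2) μ hr).mul (hM2 μ hμ).hasDerivAt)).mul_const _
  -- ν direction
  have hfun : (fun t : ℝ => (Real.sqrt (μ ^ 2 + t ^ 2))⁻¹)
      = fun t => (Real.sqrt (t ^ 2 + μ ^ 2))⁻¹ := by
    funext t; rw [add_comm]
  have hfun2 : (fun t : ℝ => -(t / Real.sqrt (μ ^ 2 + t ^ 2) ^ 3))
      = fun t => -(t / Real.sqrt (t ^ 2 + μ ^ 2) ^ 3) := by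
    funext t; rw [add_comm]
  have hgν : ∀ x : ℝ, HasDerivAt (fun t => (Real.sqrt (μ ^ 2 + t ^ 2))⁻¹)
      (-(x / Real.sqrt (μ ^ 2 + x ^ 2) ^ 3)) x := by
    intro x
    rw [hfun, add_comm (μ ^ 2) (x ^ 2)]
    exact hasDerivAt_sqrtinv (μ ^ 2) x (by positivity)
  have hgν' : ∀ x : ℝ, HasDerivAt (fun t => -(t / Real.sqrt (μ ^ 2 + t ^ 2) ^ 3))
      ((3 * x ^ 2 - (μ ^ 2 + x ^ 2)) / Real.sqrt (μ ^ 2 + x ^ 2) ^ 5) x := by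
    intro x
    rw [hfun2, add_comm (μ ^ 2) (x ^ 2)]
    exact hasDerivAt_sqrtinv' (μ ^ 2) x (by positivity)
  have hDν : ∀ x : ℝ, HasDerivAt (fun nn => (Real.sqrt (μ ^ 2 + nn ^ 2))⁻¹ * M μ *
      (C * Real.cos (n * nn) + D * Real.sin (n * nn)))
      (-(x / Real.sqrt (μ ^ 2 + x ^ 2) ^ 3) * M μ *
        (C * Real.cos (n * x) + D * Real.sin (n * x))
        + (Real.sqrt (μ ^ 2 + x ^ 2))⁻¹ * M μ *
          (-(C * n * Real.sin (n * x)) + D * n * Real.cos (n * x))) x := by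
    intro x
    exact ((hgν x).mul_const (M μ)).mul (hasDerivAt_N n C D x)
  have hderiv2 : deriv (fun nn => (Real.sqrt (μ ^ 2 + nn ^ 2))⁻¹ * M μ *
      (C * Real.cos (n * nn) + D * Real.sin (n * nn)))
      = fun x => -(x / Real.sqrt (μ ^ 2 + x ^ 2) ^ 3) * M μ *
        (C * Real.cos (n * x) + D * Real.sin (n * x))
        + (Real.sqrt (μ ^ 2 + x ^ 2))⁻¹ * M μ *
          (-(C * n * Real.sin (n * x)) + D * n * Real.cos (n * x)) :=
    funext fun x => (hDν x).deriv
  have hQ : HasDerivAt (fun x => -(x / Real.sqrt (μ ^ 2 + x ^ 2) ^ 3) * M μ *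
        (C * Real.cos (n * x) + D * Real.sin (n * x))
        + (Real.sqrt (μ ^ 2 + x ^ 2))⁻¹ * M μ *
          (-(C * n * Real.sin (n * x)) + D * n * Real.cos (n * x)))
      (((3 * ν ^ 2 - (μ ^ 2 + ν ^ 2)) / Real.sqrt (μ ^ 2 + ν ^ 2) ^ 5 * M μ *
          (C * Real.cos (n * ν) + D * Real.sin (n * ν))
        + -(ν / Real.sqrt (μ ^ 2 + ν ^ 2) ^ 3) * M μ *
          (-(C * n * Real.sin (n * ν)) + D * n * Real.cos (n * ν)))
        + (-(ν / Real.sqrt (μ ^ 2 + ν ^ 2) ^ 3) * M μ *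
          (-(C * n * Real.sin (n * ν)) + D * n * Real.cos (n * ν))
        + (Real.sqrt (μ ^ 2 + ν ^ 2))⁻¹ * M μ *
          (-(n ^ 2) * (C * Real.cos (n * ν) + D * Real.sin (n * ν))))) ν :=
    ((((hgν' ν).mul_const (M μ)).mul (hasDerivAt_N n C D ν)).add
      (((hgν ν).mul_const (M μ)).mul (hasDerivAt_N' n C D ν)))
  rw [hkeyμ, hP.deriv, (hDμ μ hμ).deriv, (hDν ν).deriv, hderiv2, hQ.deriv]
  have hM'' : deriv (deriv M) μ = deriv M μ / μ + n ^ 2 * M μ := by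
    have := hM μ hμ; linarith
  rw [hM'']
  set s := Real.sqrt (μ ^ 2 + ν ^ 2) with hsd
  have e3 : s ^ 3 = (μ ^ 2 + ν ^ 2) * s := by rw [pow_succ, hs2]
  have e5 : s ^ 5 = (μ ^ 2 + ν ^ 2) ^ 2 * s := by
    rw [show (5 : ℕ) = 2 + 2 + 1 from rfl, pow_add, pow_add, pow_one, hs2]; ring
  rw [e3, e5]
  field_simp
  ring
end

section
/- Let M, N be twice differentiable on (0,∞) and set ψ(μ,ν) = (√2(μ²+ν²))⁻¹ M(μ)N(ν). Then the cardioid Stokes equation E²ψ = 0, where E² = (μ²+ν²)³[∂²/∂μ² + (3μ²−ν²)/(μ(μ²+ν²)) ∂/∂μ + (3ν²−μ²)/(ν(μ²+ν²)) ∂/∂ν + ∂²/∂ν²], holds at a point (μ,ν) with μ,ν > 0 and M(μ)N(ν) ≠ 0 if and only if (M''(μ) − M'(μ)/μ)/M(μ) + (N''(ν) − N'(ν)/ν)/N(ν) = 0 at that point. -/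
lemma auxM_d1 (M : ℝ → ℝ) (hM1 : ∀ x > 0, DifferentiableAt ℝ M x)
    (k a : ℝ) (hk : 0 < k) :
    ∀ x > 0, deriv (fun m => (Real.sqrt 2 * (m ^ 2 + k))⁻¹ * M m * a) x
      = a * (deriv M x / (Real.sqrt 2 * (x ^ 2 + k))
          - 2 * x * M x / (Real.sqrt 2 * (x ^ 2 + k) ^ 2)) := by
  intro x hx
  have hc : Real.sqrt 2 ≠ 0 := by positivity
  have hs : x ^ 2 + k ≠ 0 := by positivity
  have hgne : Real.sqrt 2 * (x ^ 2 + k) ≠ 0 := by positivity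
  have hg : HasDerivAt (fun m => Real.sqrt 2 * (m ^ 2 + k)) (Real.sqrt 2 * (2 * x)) x := by
    simpa using ((hasDerivAt_pow 2 x).add_const k).const_mul (Real.sqrt 2)
  have hf : HasDerivAt (fun m => (Real.sqrt 2 * (m ^ 2 + k))⁻¹ * M m * a)
      ((-(Real.sqrt 2 * (2 * x)) / (Real.sqrt 2 * (x ^ 2 + k)) ^ 2 * M x
        + (Real.sqrt 2 * (x ^ 2 + k))⁻¹ * deriv M x) * a) x :=
    ((hg.inv hgne).mul ((hM1 x hx).hasDerivAt)).mul_const a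
  rw [hf.deriv]
  field_simp
  ring

lemma auxM_d2 (M : ℝ → ℝ) (hM1 : ∀ x > 0, DifferentiableAt ℝ M x)
    (hM2 : ∀ x > 0, DifferentiableAt ℝ (deriv M) x)
    (k a : ℝ) (hk : 0 < k) (μ : ℝ) (hμ : 0 < μ) :
    deriv (deriv (fun m => (Real.sqrt 2 * (m ^ 2 + k))⁻¹ * M m * a)) μ
      = a * (deriv (deriv M) μ / (Real.sqrt 2 * (μ ^ 2 + k))
          - 4 * μ * deriv M μ / (Real.sqrt 2 * (μ ^ 2 + k) ^ 2)
          - 2 * M μ / (Real.sqrt 2 * (μ ^ 2 + k) ^ 2)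
          + 8 * μ ^ 2 * M μ / (Real.sqrt 2 * (μ ^ 2 + k) ^ 3)) := by
  have hc : Real.sqrt 2 ≠ 0 := by positivity
  have hs : μ ^ 2 + k ≠ 0 := by positivity
  have hgne : Real.sqrt 2 * (μ ^ 2 + k) ≠ 0 := by positivity
  have hgne2 : Real.sqrt 2 * (μ ^ 2 + k) ^ 2 ≠ 0 := by positivity
  have hev : deriv (fun m => (Real.sqrt 2 * (m ^ 2 + k))⁻¹ * M m * a)
      =ᶠ[nhds μ] fun x => a * (deriv M x / (Real.sqrt 2 * (x ^ 2 + k))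
          - 2 * x * M x / (Real.sqrt 2 * (x ^ 2 + k) ^ 2)) := by
    filter_upwards [Ioi_mem_nhds hμ] with x hx
    exact auxM_d1 M hM1 k a hk x hx
  have hg : HasDerivAt (fun m => Real.sqrt 2 * (m ^ 2 + k)) (Real.sqrt 2 * (2 * μ)) μ := by
    simpa using ((hasDerivAt_pow 2 μ).add_const k).const_mul (Real.sqrt 2)
  have hpk : HasDerivAt (fun x : ℝ => x ^ 2 + k) (2 * μ) μ := by
    simpa using (hasDerivAt_pow 2 μ).add_const k
  have hg2 : HasDerivAt (fun x => Real.sqrt 2 * (x ^ 2 + k) ^ 2)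
      (Real.sqrt 2 * ((2 : ℕ) * (μ ^ 2 + k) ^ 1 * (2 * μ))) μ :=
    (hpk.pow 2).const_mul (Real.sqrt 2)
  have h1 : HasDerivAt (fun x => deriv M x / (Real.sqrt 2 * (x ^ 2 + k)))
      ((deriv (deriv M) μ * (Real.sqrt 2 * (μ ^ 2 + k))
        - deriv M μ * (Real.sqrt 2 * (2 * μ))) / (Real.sqrt 2 * (μ ^ 2 + k)) ^ 2) μ :=
    (hM2 μ hμ).hasDerivAt.div hg hgne
  have hnum : HasDerivAt (fun x => 2 * x * M x) (2 * 1 * M μ + 2 * μ * deriv M μ) μ :=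
    ((hasDerivAt_id μ).const_mul 2).mul (hM1 μ hμ).hasDerivAt
  have h2 : HasDerivAt (fun x => 2 * x * M x / (Real.sqrt 2 * (x ^ 2 + k) ^ 2))
      (((2 * 1 * M μ + 2 * μ * deriv M μ) * (Real.sqrt 2 * (μ ^ 2 + k) ^ 2)
        - 2 * μ * M μ * (Real.sqrt 2 * ((2 : ℕ) * (μ ^ 2 + k) ^ 1 * (2 * μ))))
        / (Real.sqrt 2 * (μ ^ 2 + k) ^ 2) ^ 2) μ :=
    hnum.div hg2 hgne2
  have hd1 : HasDerivAt (fun x => a * (deriv M x / (Real.sqrt 2 * (x ^ 2 + k))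
      - 2 * x * M x / (Real.sqrt 2 * (x ^ 2 + k) ^ 2))) _ μ := (h1.sub h2).const_mul a
  rw [hev.deriv_eq, hd1.deriv]
  field_simp
  ring

lemma auxN_d1 (N : ℝ → ℝ) (hN1 : ∀ x > 0, DifferentiableAt ℝ N x)
    (k a : ℝ) (hk : 0 < k) :
    ∀ x > 0, deriv (fun nn => (Real.sqrt 2 * (k + nn ^ 2))⁻¹ * a * N nn) x
      = a * (deriv N x / (Real.sqrt 2 * (k + x ^ 2))
          - 2 * x * N x / (Real.sqrt 2 * (k + x ^ 2) ^ 2)) := by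
  intro x hx
  have hc : Real.sqrt 2 ≠ 0 := by positivity
  have hgne : Real.sqrt 2 * (k + x ^ 2) ≠ 0 := by positivity
  have hs : k + x ^ 2 ≠ 0 := by positivity
  have hg : HasDerivAt (fun m => Real.sqrt 2 * (k + m ^ 2)) (Real.sqrt 2 * (2 * x)) x := by
    simpa using ((hasDerivAt_pow 2 x).const_add k).const_mul (Real.sqrt 2)
  have hf : HasDerivAt (fun nn => (Real.sqrt 2 * (k + nn ^ 2))⁻¹ * a * N nn)
      ((-(Real.sqrt 2 * (2 * x)) / (Real.sqrt 2 * (k + x ^ 2)) ^ 2 * a) * N x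
        + (Real.sqrt 2 * (k + x ^ 2))⁻¹ * a * deriv N x) x :=
    ((hg.inv hgne).mul_const a).mul ((hN1 x hx).hasDerivAt)
  rw [hf.deriv]
  field_simp
  ring

lemma auxN_d2 (N : ℝ → ℝ) (hN1 : ∀ x > 0, DifferentiableAt ℝ N x)
    (hN2 : ∀ x > 0, DifferentiableAt ℝ (deriv N) x)
    (k a : ℝ) (hk : 0 < k) (ν : ℝ) (hν : 0 < ν) :
    deriv (deriv (fun nn => (Real.sqrt 2 * (k + nn ^ 2))⁻¹ * a * N nn)) ν
      = a * (deriv (deriv N) ν / (Real.sqrt 2 * (k + ν ^ 2))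
          - 4 * ν * deriv N ν / (Real.sqrt 2 * (k + ν ^ 2) ^ 2)
          - 2 * N ν / (Real.sqrt 2 * (k + ν ^ 2) ^ 2)
          + 8 * ν ^ 2 * N ν / (Real.sqrt 2 * (k + ν ^ 2) ^ 3)) := by
  have hc : Real.sqrt 2 ≠ 0 := by positivity
  have hs : k + ν ^ 2 ≠ 0 := by positivity
  have hgne : Real.sqrt 2 * (k + ν ^ 2) ≠ 0 := by positivity
  have hgne2 : Real.sqrt 2 * (k + ν ^ 2) ^ 2 ≠ 0 := by positivity
  have hev : deriv (fun nn => (Real.sqrt 2 * (k + nn ^ 2))⁻¹ * a * N nn)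
      =ᶠ[nhds ν] fun x => a * (deriv N x / (Real.sqrt 2 * (k + x ^ 2))
          - 2 * x * N x / (Real.sqrt 2 * (k + x ^ 2) ^ 2)) := by
    filter_upwards [Ioi_mem_nhds hν] with x hx
    exact auxN_d1 N hN1 k a hk x hx
  have hg : HasDerivAt (fun m => Real.sqrt 2 * (k + m ^ 2)) (Real.sqrt 2 * (2 * ν)) ν := by
    simpa using ((hasDerivAt_pow 2 ν).const_add k).const_mul (Real.sqrt 2)
  have hpk : HasDerivAt (fun x : ℝ => k + x ^ 2) (2 * ν) ν := by
    simpa using (hasDerivAt_pow 2 ν).const_add k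
  have hg2 : HasDerivAt (fun x => Real.sqrt 2 * (k + x ^ 2) ^ 2)
      (Real.sqrt 2 * ((2 : ℕ) * (k + ν ^ 2) ^ 1 * (2 * ν))) ν :=
    (hpk.pow 2).const_mul (Real.sqrt 2)
  have h1 : HasDerivAt (fun x => deriv N x / (Real.sqrt 2 * (k + x ^ 2)))
      ((deriv (deriv N) ν * (Real.sqrt 2 * (k + ν ^ 2))
        - deriv N ν * (Real.sqrt 2 * (2 * ν))) / (Real.sqrt 2 * (k + ν ^ 2)) ^ 2) ν :=
    (hN2 ν hν).hasDerivAt.div hg hgne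
  have hnum : HasDerivAt (fun x => 2 * x * N x) (2 * 1 * N ν + 2 * ν * deriv N ν) ν :=
    ((hasDerivAt_id ν).const_mul 2).mul (hN1 ν hν).hasDerivAt
  have h2 : HasDerivAt (fun x => 2 * x * N x / (Real.sqrt 2 * (k + x ^ 2) ^ 2))
      (((2 * 1 * N ν + 2 * ν * deriv N ν) * (Real.sqrt 2 * (k + ν ^ 2) ^ 2)
        - 2 * ν * N ν * (Real.sqrt 2 * ((2 : ℕ) * (k + ν ^ 2) ^ 1 * (2 * ν))))
        / (Real.sqrt 2 * (k + ν ^ 2) ^ 2) ^ 2) ν :=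
    hnum.div hg2 hgne2
  have hd1 : HasDerivAt (fun x => a * (deriv N x / (Real.sqrt 2 * (k + x ^ 2))
      - 2 * x * N x / (Real.sqrt 2 * (k + x ^ 2) ^ 2))) _ ν := (h1.sub h2).const_mul a
  rw [hev.deriv_eq, hd1.deriv]
  field_simp
  ring
theorem cardioid_R_separation (M N : ℝ → ℝ)
    (hM1 : ∀ x > 0, DifferentiableAt ℝ M x)
    (hM2 : ∀ x > 0, DifferentiableAt ℝ (deriv M) x)
    (hN1 : ∀ x > 0, DifferentiableAt ℝ N x)
    (hN2 : ∀ x > 0, DifferentiableAt ℝ (deriv N) x)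
    (μ ν : ℝ) (hμ : 0 < μ) (hν : 0 < ν) (hMN : M μ * N ν ≠ 0) :
    ((μ ^ 2 + ν ^ 2) ^ 3 *
      (deriv (deriv (fun m => (Real.sqrt 2 * (m ^ 2 + ν ^ 2))⁻¹ * M m * N ν)) μ
        + (3 * μ ^ 2 - ν ^ 2) / (μ * (μ ^ 2 + ν ^ 2)) *
            deriv (fun m => (Real.sqrt 2 * (m ^ 2 + ν ^ 2))⁻¹ * M m * N ν) μ
        + (3 * ν ^ 2 - μ ^ 2) / (ν * (μ ^ 2 + ν ^ 2)) *
            deriv (fun nn => (Real.sqrt 2 * (μ ^ 2 + nn ^ 2))⁻¹ * M μ * N nn) ν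
        + deriv (deriv (fun nn => (Real.sqrt 2 * (μ ^ 2 + nn ^ 2))⁻¹ * M μ * N nn)) ν) = 0)
    ↔ (deriv (deriv M) μ - deriv M μ / μ) / M μ
        + (deriv (deriv N) ν - deriv N ν / ν) / N ν = 0 := by
  have hk1 : (0 : ℝ) < ν ^ 2 := by positivity
  have hk2 : (0 : ℝ) < μ ^ 2 := by positivity
  have hP : M μ ≠ 0 := fun h => hMN (by rw [h]; ring)
  have hQ : N ν ≠ 0 := fun h => hMN (by rw [h]; ring)
  have hc : Real.sqrt 2 ≠ 0 := by positivity
  have hs : μ ^ 2 + ν ^ 2 ≠ 0 := by positivity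
  have hμ' : μ ≠ 0 := hμ.ne'
  have hν' : ν ≠ 0 := hν.ne'
  rw [auxM_d2 M hM1 hM2 (ν ^ 2) (N ν) hk1 μ hμ,
      auxM_d1 M hM1 (ν ^ 2) (N ν) hk1 μ hμ,
      auxN_d1 N hN1 (μ ^ 2) (M μ) hk2 ν hν,
      auxN_d2 N hN1 hN2 (μ ^ 2) (M μ) hk2 ν hν,
      div_add_div _ _ hP hQ, div_eq_zero_iff, or_iff_left hMN]
  have hK : (Real.sqrt 2)⁻¹ * (μ ^ 2 + ν ^ 2) ^ 2 ≠ 0 := by positivity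
  have key : (μ ^ 2 + ν ^ 2) ^ 3 *
      (N ν * (deriv (deriv M) μ / (Real.sqrt 2 * (μ ^ 2 + ν ^ 2))
          - 4 * μ * deriv M μ / (Real.sqrt 2 * (μ ^ 2 + ν ^ 2) ^ 2)
          - 2 * M μ / (Real.sqrt 2 * (μ ^ 2 + ν ^ 2) ^ 2)
          + 8 * μ ^ 2 * M μ / (Real.sqrt 2 * (μ ^ 2 + ν ^ 2) ^ 3))
        + (3 * μ ^ 2 - ν ^ 2) / (μ * (μ ^ 2 + ν ^ 2)) *
            (N ν * (deriv M μ / (Real.sqrt 2 * (μ ^ 2 + ν ^ 2))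
              - 2 * μ * M μ / (Real.sqrt 2 * (μ ^ 2 + ν ^ 2) ^ 2)))
        + (3 * ν ^ 2 - μ ^ 2) / (ν * (μ ^ 2 + ν ^ 2)) *
            (M μ * (deriv N ν / (Real.sqrt 2 * (μ ^ 2 + ν ^ 2))
              - 2 * ν * N ν / (Real.sqrt 2 * (μ ^ 2 + ν ^ 2) ^ 2)))
        + M μ * (deriv (deriv N) ν / (Real.sqrt 2 * (μ ^ 2 + ν ^ 2))
          - 4 * ν * deriv N ν / (Real.sqrt 2 * (μ ^ 2 + ν ^ 2) ^ 2)
          - 2 * N ν / (Real.sqrt 2 * (μ ^ 2 + ν ^ 2) ^ 2)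
          + 8 * ν ^ 2 * N ν / (Real.sqrt 2 * (μ ^ 2 + ν ^ 2) ^ 3)))
      = (Real.sqrt 2)⁻¹ * (μ ^ 2 + ν ^ 2) ^ 2 *
        ((deriv (deriv M) μ - deriv M μ / μ) * N ν
          + M μ * (deriv (deriv N) ν - deriv N ν / ν)) := by
    field_simp
    ring
  rw [key, mul_eq_zero, or_iff_right hK]
end
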